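/- Let 0 < γ < p, let a : [0,∞) → (0,∞) be a strictly decreasing function with lim_{t→∞} a(t) = 0, and let ρ be a strictly increasing positive function such that x ↦ ρ(x)/x^γ is decreasing. If for every δ > 0 one has ∑_{a(n) ≥ 2δ} a(n)^{1/p} ≤ (1 − 2^{−1/p})^{-1} ∫_{ρ(t) ≤ 1/δ} ρ(t)^{−1/p} dt, then there exists a constant C depending only on p and γ such that δ^{1/p} · #{n ≥ 1 : a(n) ≥ 2δ} ≤ C · δ^{1/p} · ρ^{−1}(1/δ) for all δ > 0 in the range of 1/ρ. -/
import Mathlib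


open MeasureTheory Filter

/-- Counting-function estimate from the key inequality in the proof of Lemma 2.10:
`δ^{1/p} · #{n ≥ 1 : a(n) ≥ 2δ} ≤ C · δ^{1/p} · ρ⁻¹(1/δ)` for `δ` in the range of `1/ρ`. -/
theorem stmt_3 (p γ : ℝ) (a ρ : ℝ → ℝ)
    (hγ : 0 < γ) (hγp : γ < p)
    (ha_pos : ∀ t : ℝ, 0 ≤ t → 0 < a t) (ha_anti : StrictAntiOn a (Set.Ici 0))
    (ha_lim : Tendsto a atTop (nhds 0))
    (hρ_pos : ∀ x : ℝ, 0 ≤ x → 0 < ρ x) (hρ_mono : StrictMonoOn ρ (Set.Ici 0))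
    (hratio : AntitoneOn (fun x : ℝ => ρ x / x ^ γ) (Set.Ioi 0))
    (hyp : ∀ δ : ℝ, 0 < δ →
      ∑' n : {n : ℕ | 1 ≤ n ∧ 2 * δ ≤ a n}, ENNReal.ofReal (a (n : ℕ) ^ (1 / p)) ≤
        ENNReal.ofReal ((1 - 2 ^ (-(1 / p)) : ℝ)⁻¹) *
          ∫⁻ t in Set.Ioi (0 : ℝ) ∩ {t : ℝ | ρ t ≤ 1 / δ},
            ENNReal.ofReal (ρ t ^ (-(1 / p)))) :
    ∃ C : ℝ, 0 < C ∧ ∀ x : ℝ, 0 ≤ x →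
      (1 / ρ x) ^ (1 / p) * (Nat.card {n : ℕ | 1 ≤ n ∧ 2 * (1 / ρ x) ≤ a n} : ℝ) ≤
        C * (1 / ρ x) ^ (1 / p) * x := by
  have hp : 0 < p := hγ.trans hγp
  have hp' : 0 < 1 / p := by positivity
  have h2 : (0:ℝ) < 2 ^ (-(1/p)) := Real.rpow_pos_of_pos two_pos _
  have h2' : (2:ℝ) ^ (-(1/p)) < 1 :=
    Real.rpow_lt_one_of_one_lt_of_neg one_lt_two (by linarith)
  have hK : (0:ℝ) < (1 - 2 ^ (-(1/p)))⁻¹ := by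
    have : (0:ℝ) < 1 - 2 ^ (-(1/p)) := by linarith
    positivity
  set K : ℝ := (1 - 2 ^ (-(1/p)))⁻¹ with hKdef
  have hγp' : 0 < 1 - γ / p := by
    have : γ / p < 1 := (div_lt_one hp).mpr hγp
    linarith
  have h2p : (0:ℝ) < 2 ^ (1/p) := Real.rpow_pos_of_pos two_pos _
  refine ⟨K / (2 ^ (1/p) * (1 - γ/p)), by positivity, ?_⟩
  set C : ℝ := K / (2 ^ (1/p) * (1 - γ/p)) with hCdef
  intro x hx
  have hρx : 0 < ρ x := hρ_pos x hx
  set δ : ℝ := 1 / ρ x with hδdef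
  have hδ : 0 < δ := by positivity
  have hδp : (0:ℝ) < δ ^ (1/p) := Real.rpow_pos_of_pos hδ _
  set S : Set ℕ := {n : ℕ | 1 ≤ n ∧ 2 * δ ≤ a n} with hSdef
  -- key claim: (Nat.card S : ℝ) ≤ C * x
  have key : (Nat.card S : ℝ) ≤ C * x := by
    by_cases hfin : S.Finite
    · haveI := hfin.fintype
      set N := Nat.card S with hN
      -- Step A : lower bound the tsum
      have stepA : ENNReal.ofReal ((N : ℝ) * (2 * δ) ^ (1/p)) ≤
          ∑' n : S, ENNReal.ofReal (a (n : ℕ) ^ (1 / p)) := by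
        rw [tsum_fintype]
        have hcard : N = Finset.univ.card (α := S) := by
          rw [hN, Nat.card_eq_fintype_card, Finset.card_univ]
        calc ENNReal.ofReal ((N : ℝ) * (2 * δ) ^ (1/p))
            = N • ENNReal.ofReal ((2 * δ) ^ (1/p)) := by
              rw [nsmul_eq_mul, ← ENNReal.ofReal_natCast, ← ENNReal.ofReal_mul (by positivity)]
          _ = Finset.univ.card (α := S) • ENNReal.ofReal ((2 * δ) ^ (1/p)) := by rw [hcard]
          _ ≤ ∑ n : S, ENNReal.ofReal (a (n : ℕ) ^ (1 / p)) := by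
              apply Finset.card_nsmul_le_sum
              intro n _
              apply ENNReal.ofReal_le_ofReal
              exact Real.rpow_le_rpow (by positivity) n.2.2 (le_of_lt hp')
      -- Step B : upper bound the integral
      have stepB : (∫⁻ t in Set.Ioi (0 : ℝ) ∩ {t : ℝ | ρ t ≤ 1 / δ},
            ENNReal.ofReal (ρ t ^ (-(1 / p)))) ≤
          ENNReal.ofReal (δ ^ (1/p) * x / (1 - γ/p)) := by
        set r : ℝ := -(γ/p) with hrdef
        have hr1 : (-1:ℝ) < r := by
          rw [hrdef]
          have : γ / p < 1 := (div_lt_one hp).mpr hγp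
          linarith
        set c : ℝ := ρ x ^ (-(1/p)) * x ^ (γ/p) with hcdef
        have hc : 0 ≤ c := by positivity
        have hsub : Set.Ioi (0 : ℝ) ∩ {t : ℝ | ρ t ≤ 1 / δ} ⊆ Set.Ioc 0 x := by
          intro t ht
          obtain ⟨ht0, htρ⟩ := ht
          have hδρ : 1 / δ = ρ x := by rw [hδdef, one_div_one_div]
          rw [Set.mem_setOf_eq, hδρ] at htρ
          refine ⟨ht0, ?_⟩
          by_contra hlt
          push_neg at hlt
          exact absurd (hρ_mono (Set.mem_Ici.mpr hx) (Set.mem_Ici.mpr (hx.trans hlt.le)) hlt) (not_lt.mpr htρ)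
        calc (∫⁻ t in Set.Ioi (0 : ℝ) ∩ {t : ℝ | ρ t ≤ 1 / δ},
              ENNReal.ofReal (ρ t ^ (-(1 / p))))
            ≤ ∫⁻ t in Set.Ioc (0:ℝ) x, ENNReal.ofReal (ρ t ^ (-(1 / p))) :=
              lintegral_mono_set hsub
          _ ≤ ∫⁻ t in Set.Ioc (0:ℝ) x, ENNReal.ofReal (c * t ^ r) := by
              apply setLIntegral_mono (by fun_prop)
              intro t ht
              apply ENNReal.ofReal_le_ofReal
              obtain ⟨ht0, htx⟩ := ht
              have hx0 : 0 < x := lt_of_lt_of_le ht0 htx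
              have hratio' := hratio (Set.mem_Ioi.mpr ht0) (Set.mem_Ioi.mpr hx0) htx
              simp only at hratio'
              have htγ : (0:ℝ) < t ^ γ := Real.rpow_pos_of_pos ht0 _
              have hxγ : (0:ℝ) < x ^ γ := Real.rpow_pos_of_pos hx0 _
              have hlow : ρ x * t ^ γ / x ^ γ ≤ ρ t := by
                calc ρ x * t ^ γ / x ^ γ = (ρ x / x ^ γ) * t ^ γ := by ring
                  _ ≤ (ρ t / t ^ γ) * t ^ γ := mul_le_mul_of_nonneg_right hratio' htγ.le
                  _ = ρ t := div_mul_cancel₀ _ htγ.ne'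
              have hlow0 : (0:ℝ) < ρ x * t ^ γ / x ^ γ := by positivity
              have h1 : ρ t ^ (-(1/p)) ≤ (ρ x * t ^ γ / x ^ γ) ^ (-(1/p)) :=
                Real.rpow_le_rpow_of_nonpos hlow0 hlow (neg_nonpos.mpr hp'.le)
              have h2e : (ρ x * t ^ γ / x ^ γ) ^ (-(1/p)) = c * t ^ r := by
                rw [Real.div_rpow (by positivity) hxγ.le,
                  Real.mul_rpow hρx.le htγ.le,
                  ← Real.rpow_mul ht0.le, ← Real.rpow_mul hx0.le,
                  show γ * (-(1/p)) = -(γ/p) by ring,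
                  Real.rpow_neg hx0.le, div_eq_mul_inv, inv_inv, hcdef, hrdef]
                ring
              rw [← h2e]; exact h1
          _ = ENNReal.ofReal (∫ t in Set.Ioc (0:ℝ) x, c * t ^ r) := by
              have hint : IntegrableOn (fun t : ℝ => c * t ^ r) (Set.Ioc 0 x) volume := by
                have := (intervalIntegral.intervalIntegrable_rpow' (a := 0) (b := x) hr1).const_mul c
                rwa [intervalIntegrable_iff_integrableOn_Ioc_of_le hx] at this
              have hnn : 0 ≤ᵐ[volume.restrict (Set.Ioc (0:ℝ) x)] fun t => c * t ^ r :=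
                (ae_restrict_iff' measurableSet_Ioc).mpr (ae_of_all _ (fun t ht => by
                  have ht0 : (0:ℝ) < t := ht.1
                  positivity))
              rw [← ofReal_integral_eq_lintegral_ofReal hint hnn]
          _ ≤ ENNReal.ofReal (δ ^ (1/p) * x / (1 - γ/p)) := by
              apply ENNReal.ofReal_le_ofReal
              have hval : ∫ t in Set.Ioc (0:ℝ) x, c * t ^ r
                  = c * (x ^ (r+1) / (r+1)) := by
                rw [MeasureTheory.integral_const_mul, ← intervalIntegral.integral_of_le hx,
                  integral_rpow (Or.inl hr1), Real.zero_rpow (by linarith), sub_zero]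
              rw [hval]
              apply le_of_eq
              have hδppow : δ ^ (1/p) = ρ x ^ (-(1/p)) := by
                rw [hδdef, one_div, Real.inv_rpow hρx.le, ← Real.rpow_neg hρx.le]
              have hxsum : x ^ (γ/p) * x ^ (r+1) = x := by
                rw [← Real.rpow_add' hx (by rw [hrdef]; ring_nf; linarith)]
                norm_num [hrdef]
              calc c * (x ^ (r+1)/(r+1)) = δ ^ (1/p) * (x ^ (γ/p) * x ^ (r+1)) / (r+1) := by
                    rw [hδppow, hcdef]; ring
                _ = δ ^ (1/p) * x / (1 - γ/p) := by
                    rw [hxsum, hrdef]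
                    congr 1
                    ring
      have h1 := hyp δ hδ
      have h2'' : ENNReal.ofReal ((N : ℝ) * (2 * δ) ^ (1/p)) ≤
          ENNReal.ofReal (K * (δ ^ (1/p) * x / (1 - γ/p))) := by
        calc ENNReal.ofReal ((N : ℝ) * (2 * δ) ^ (1/p)) ≤ _ := stepA
          _ ≤ _ := h1
          _ ≤ ENNReal.ofReal K * ENNReal.ofReal (δ ^ (1/p) * x / (1 - γ/p)) :=
              mul_le_mul_right stepB _
          _ = ENNReal.ofReal (K * (δ ^ (1/p) * x / (1 - γ/p))) :=
              (ENNReal.ofReal_mul hK.le).symm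
      have hreal : (N : ℝ) * (2 * δ) ^ (1/p) ≤ K * (δ ^ (1/p) * x / (1 - γ/p)) := by
        have hrhs : 0 ≤ K * (δ ^ (1/p) * x / (1 - γ/p)) := by positivity
        exact (ENNReal.ofReal_le_ofReal_iff hrhs).mp h2''
      -- algebra
      have hsplit : (2 * δ) ^ (1/p) = 2 ^ (1/p) * δ ^ (1/p) :=
        Real.mul_rpow (by norm_num) hδ.le
      rw [hsplit] at hreal
      have : (N : ℝ) * 2 ^ (1/p) * δ ^ (1/p) ≤ (K * (x / (1 - γ/p))) * δ ^ (1/p) := by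
        ring_nf
        ring_nf at hreal
        linarith
      have h3 := le_of_mul_le_mul_right this hδp
      rw [hCdef]
      rw [div_mul_eq_mul_div, le_div_iff₀ (by positivity)] at *
      calc (N:ℝ) * (2 ^ (1/p) * (1 - γ/p)) = ((N:ℝ) * 2 ^ (1/p)) * (1 - γ/p) := by ring
        _ ≤ (K * (x / (1 - γ/p))) * (1 - γ/p) := by
            apply mul_le_mul_of_nonneg_right h3 hγp'.le
        _ = K * x := by rw [mul_assoc, div_mul_cancel₀ _ hγp'.ne']
    · rw [Set.Infinite.card_eq_zero hfin]
      simp only [Nat.cast_zero]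
      positivity
  calc δ ^ (1/p) * (Nat.card S : ℝ) ≤ δ ^ (1/p) * (C * x) := by
        exact mul_le_mul_of_nonneg_left key hδp.le
    _ = C * δ ^ (1/p) * x := by ring
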